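/- Let n ≥ 1 and let f : ℝⁿ → ℝ be differentiable on the open positive cone Γ₊, positively 1-homogeneous on Γ₊, and with all partial derivatives ∂ᵢf(κ) > 0 on Γ₊. Then for every κ ∈ Γ₊ and every symmetric real n×n matrix η one has f(κ) · ∑_{i,j} (∂ᵢf(κ)/κⱼ) ηᵢⱼ² ≥ (∑ᵢ ∂ᵢf(κ) ηᵢᵢ)². (This is the coordinate form, in a frame diagonalizing the Weingarten map h = diag(κ), of the paper's inequality (f^{ik} b^{jl} − f^{ij} f^{kl}/f) η_{ij} η_{kl} ≥ 0, where b = diag(1/κᵢ); note f(κ) = ∑ᵢ κᵢ ∂ᵢf(κ) > 0 by Euler's identity.) -/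

import Mathlib

theorem stmt_0 (n : ℕ) (hn : 1 ≤ n) (f : (Fin n → ℝ) → ℝ)
    (hdiff : ∀ κ : Fin n → ℝ, (∀ i, 0 < κ i) → DifferentiableAt ℝ f κ)
    (hhom : ∀ t : ℝ, 0 < t → ∀ κ : Fin n → ℝ, (∀ i, 0 < κ i) → f (t • κ) = t * f κ)
    (hmono : ∀ κ : Fin n → ℝ, (∀ i, 0 < κ i) → ∀ i, 0 < fderiv ℝ f κ (Pi.single i 1))
    (κ : Fin n → ℝ) (hκ : ∀ i, 0 < κ i)
    (η : Matrix (Fin n) (Fin n) ℝ) (hη : η.IsSymm) :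
    (∑ i, fderiv ℝ f κ (Pi.single i 1) * η i i) ^ 2 ≤
      f κ * ∑ i, ∑ j, (fderiv ℝ f κ (Pi.single i 1) / κ j) * (η i j) ^ 2 := by
  set D := fderiv ℝ f κ with hD
  set F : Fin n → ℝ := fun i => D (Pi.single i 1) with hF
  have hFpos : ∀ i, 0 < F i := hmono κ hκ
  -- Euler's identity
  have hEuler : f κ = ∑ i, κ i * F i := by
    have h2 : HasDerivAt (fun t : ℝ => t • κ) κ 1 := by
      simpa using (hasDerivAt_id (1 : ℝ)).smul_const κ
    have h1 : HasDerivAt (fun t : ℝ => f (t • κ)) (D κ) 1 := by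
      have hf' : HasFDerivAt f D ((1 : ℝ) • κ) := by
        rw [one_smul]; exact (hdiff κ hκ).hasFDerivAt
      have := hf'.comp_hasDerivAt 1 h2
      exact this
    have heq : (fun t : ℝ => f (t • κ)) =ᶠ[nhds (1 : ℝ)] fun t => t * f κ := by
      filter_upwards [lt_mem_nhds (show (0 : ℝ) < 1 by norm_num)] with t ht
      exact hhom t ht κ hκ
    have h3 : HasDerivAt (fun t : ℝ => t * f κ) (D κ) 1 :=
      h1.congr_of_eventuallyEq heq.symm
    have h4 : HasDerivAt (fun t : ℝ => t * f κ) (f κ) 1 := by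
      simpa using (hasDerivAt_id (1 : ℝ)).mul_const (f κ)
    have hDκ : D κ = f κ := h3.unique h4
    have hκsum : κ = ∑ i, κ i • (Pi.single i 1 : Fin n → ℝ) := by
      ext j
      simp [Pi.single_apply, Finset.sum_apply]
    calc f κ = D κ := hDκ.symm
      _ = D (∑ i, κ i • (Pi.single i 1 : Fin n → ℝ)) := by rw [← hκsum]
      _ = ∑ i, κ i * F i := by
        rw [map_sum]
        simp [smul_eq_mul]
        rfl
  have hfpos : 0 < f κ := by
    rw [hEuler]
    exact Finset.sum_pos (fun i _ => mul_pos (hκ i) (hFpos i))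
      ⟨⟨0, by omega⟩, Finset.mem_univ _⟩
  -- Cauchy-Schwarz
  have hcs := Finset.sum_mul_sq_le_sq_mul_sq Finset.univ
    (fun i => Real.sqrt (F i * κ i)) (fun i => Real.sqrt (F i / κ i) * η i i)
  have key : (∑ i, F i * η i i) ^ 2 ≤ f κ * ∑ i, (F i / κ i) * (η i i) ^ 2 := by
    have e1 : ∀ i : Fin n, Real.sqrt (F i * κ i) * (Real.sqrt (F i / κ i) * η i i)
        = F i * η i i := by
      intro i
      rw [← mul_assoc, ← Real.sqrt_mul (mul_pos (hFpos i) (hκ i)).le]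
      have : F i * κ i * (F i / κ i) = F i ^ 2 := by
        field_simp
        rw [div_eq_iff (hκ i).ne']
      rw [this, Real.sqrt_sq (hFpos i).le]
    have e2 : ∀ i : Fin n, Real.sqrt (F i * κ i) ^ 2 = F i * κ i := fun i =>
      Real.sq_sqrt (mul_pos (hFpos i) (hκ i)).le
    have e3 : ∀ i : Fin n, (Real.sqrt (F i / κ i) * η i i) ^ 2
        = (F i / κ i) * (η i i) ^ 2 := by
      intro i
      rw [mul_pow, Real.sq_sqrt (div_pos (hFpos i) (hκ i)).le]
    calc (∑ i, F i * η i i) ^ 2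
        = (∑ i, Real.sqrt (F i * κ i) * (Real.sqrt (F i / κ i) * η i i)) ^ 2 := by
          rw [Finset.sum_congr rfl (fun i _ => (e1 i))]
      _ ≤ (∑ i, Real.sqrt (F i * κ i) ^ 2) * ∑ i, (Real.sqrt (F i / κ i) * η i i) ^ 2 := hcs
      _ = f κ * ∑ i, (F i / κ i) * (η i i) ^ 2 := by
          rw [Finset.sum_congr rfl (fun i _ => e2 i), Finset.sum_congr rfl (fun i _ => e3 i),
            hEuler]
          congr 1
          exact Finset.sum_congr rfl fun i _ => mul_comm _ _
  refine key.trans (mul_le_mul_of_nonneg_left ?_ hfpos.le)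
  refine Finset.sum_le_sum fun i _ => ?_
  exact Finset.single_le_sum (f := fun j => (F i / κ j) * (η i j) ^ 2)
    (fun j _ => mul_nonneg (div_pos (hFpos i) (hκ j)).le (sq_nonneg _)) (Finset.mem_univ i)
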